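/- Let n be a positive integer and work with n×n complex matrices acting on EuclideanSpace ℂ (Fin n). Let Ψ be a unit vector, let N be a matrix with operator norm ‖N‖ ≤ 1 and ⟨Ψ, N Ψ⟩ = 0, and let Q be a Hermitian matrix with 0 ⪯ Q ⪯ I. Then |⟨Ψ, Q N Q Ψ⟩| ≤ 2·‖Ψ − Q Ψ‖ ≤ 2·√(1 − Re⟨Ψ, Q Ψ⟩). -/

import Mathlib

open scoped ComplexOrder
open Matrix
/-- Loewner order for complex matrices: `A ⪯ B` iff `B − A` is positive semidefinite. -/
def Matrix.loewnerLE {n : ℕ} (A B : Matrix (Fin n) (Fin n) ℂ) : Prop :=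
  (B - A).PosSemidef

private lemma psd_inner_re_nonneg {n : ℕ} {A : Matrix (Fin n) (Fin n) ℂ} (hA : A.PosSemidef)
    (x : EuclideanSpace ℂ (Fin n)) :
    0 ≤ (inner ℂ x (Matrix.toEuclideanLin A x) : ℂ).re := by
  have := hA.re_dotProduct_nonneg (WithLp.ofLp x)
  rw [EuclideanSpace.inner_eq_star_dotProduct, Matrix.ofLp_toEuclideanLin_apply, dotProduct_comm]
  exact this

private lemma toEuclideanLin_mul {n : ℕ} (A B : Matrix (Fin n) (Fin n) ℂ)
    (x : EuclideanSpace ℂ (Fin n)) :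
    Matrix.toEuclideanLin (A * B) x = Matrix.toEuclideanLin A (Matrix.toEuclideanLin B x) := by
  simp [Matrix.toEuclideanLin_apply, Matrix.mulVec_mulVec]

/-- If `‖N‖ ≤ 1`, `⟨Ψ, NΨ⟩ = 0` and `0 ⪯ Q ⪯ I`, then
`|⟨Ψ, QNQ Ψ⟩| ≤ 2‖Ψ − QΨ‖ ≤ 2√(1 − Re⟨Ψ, QΨ⟩)`. -/
theorem off_eigenvector_contribution (n : ℕ) (hn : 0 < n)
    (Ψ : EuclideanSpace ℂ (Fin n)) (hΨ : ‖Ψ‖ = 1)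
    (N Q : Matrix (Fin n) (Fin n) ℂ)
    (hN : ‖(Matrix.toEuclideanLin N).toContinuousLinearMap‖ ≤ 1)
    (hNΨ : (inner ℂ Ψ (Matrix.toEuclideanLin N Ψ) : ℂ) = 0)
    (hQ : Q.IsHermitian) (hQ0 : Matrix.loewnerLE 0 Q) (hQ1 : Matrix.loewnerLE Q 1) :
    ‖(inner ℂ Ψ (Matrix.toEuclideanLin (Q * N * Q) Ψ) : ℂ)‖
        ≤ 2 * ‖Ψ - Matrix.toEuclideanLin Q Ψ‖ ∧
      2 * ‖Ψ - Matrix.toEuclideanLin Q Ψ‖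
        ≤ 2 * Real.sqrt (1 - (inner ℂ Ψ (Matrix.toEuclideanLin Q Ψ) : ℂ).re) := by
  have hQp : Q.PosSemidef := by
    have h := hQ0
    unfold Matrix.loewnerLE at h
    simpa using h
  have hQ1' : (1 - Q).PosSemidef := hQ1
  obtain ⟨φ, hφ⟩ : ∃ v : EuclideanSpace ℂ (Fin n), Matrix.toEuclideanLin Q Ψ = v := ⟨_, rfl⟩
  rw [hφ]
  obtain ⟨δ, hδ⟩ : ∃ v : EuclideanSpace ℂ (Fin n), Ψ - φ = v := ⟨_, rfl⟩
  rw [hδ]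
  obtain ⟨r, hr⟩ : ∃ t : ℝ, (inner ℂ Ψ φ : ℂ).re = t := ⟨_, rfl⟩
  rw [hr]
  have hφδ : φ = Ψ - δ := by rw [← hδ]; abel
  -- `N` is a contraction
  have hNle : ∀ x : EuclideanSpace ℂ (Fin n), ‖Matrix.toEuclideanLin N x‖ ≤ ‖x‖ := by
    intro x
    calc ‖Matrix.toEuclideanLin N x‖
        = ‖(Matrix.toEuclideanLin N).toContinuousLinearMap x‖ := by rfl
      _ ≤ ‖(Matrix.toEuclideanLin N).toContinuousLinearMap‖ * ‖x‖ :=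
          (Matrix.toEuclideanLin N).toContinuousLinearMap.le_opNorm x
      _ ≤ 1 * ‖x‖ := mul_le_mul_of_nonneg_right hN (norm_nonneg x)
      _ = ‖x‖ := one_mul _
  -- symmetry of Q
  have hQsym := Matrix.isHermitian_iff_isSymmetric.1 hQ
  -- r ≤ 1 from Q ⪯ 1
  have hr1 : r ≤ 1 := by
    have h := psd_inner_re_nonneg hQ1' Ψ
    have h1 : Matrix.toEuclideanLin (1 - Q) Ψ = Ψ - φ := by
      rw [← hφ]
      simp [Matrix.toEuclideanLin_apply, Matrix.sub_mulVec]
    rw [h1, inner_sub_right] at h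
    have hΨΨ : (inner ℂ Ψ Ψ : ℂ) = 1 := by
      rw [inner_self_eq_norm_sq_to_K, hΨ]; norm_num
    rw [Complex.sub_re, hΨΨ, Complex.one_re, hr] at h
    linarith
  -- Q - Q² PSD
  have hQQ : (Q - Q * Q).PosSemidef := by
    have h1 := hQ1'.conjTranspose_mul_mul_same Q
    have h2 := hQp.conjTranspose_mul_mul_same (1 - Q)
    have heq : Qᴴ * (1 - Q) * Q + (1 - Q)ᴴ * Q * (1 - Q) = Q - Q * Q := by
      rw [conjTranspose_sub, conjTranspose_one, hQ.eq]
      noncomm_ring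
    rw [← heq]
    exact h1.add h2
  -- ‖φ‖² ≤ r
  have hφsq : ‖φ‖ ^ 2 ≤ r := by
    have h := psd_inner_re_nonneg hQQ Ψ
    have h1 : Matrix.toEuclideanLin (Q - Q * Q) Ψ = φ - Matrix.toEuclideanLin Q φ := by
      rw [← hφ]
      simp [Matrix.toEuclideanLin_apply, Matrix.sub_mulVec, Matrix.mulVec_mulVec]
    rw [h1, inner_sub_right] at h
    have h2 : (inner ℂ Ψ (Matrix.toEuclideanLin Q φ) : ℂ) = inner ℂ φ φ := by
      rw [← hQsym Ψ φ, hφ]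
    rw [Complex.sub_re, h2, hr] at h
    have h3 : (inner ℂ φ φ : ℂ).re = ‖φ‖ ^ 2 := by
      simpa using inner_self_eq_norm_sq (𝕜 := ℂ) φ
    rw [h3] at h
    linarith
  have hφ1 : ‖φ‖ ≤ 1 := by nlinarith [norm_nonneg φ]
  -- ‖δ‖² ≤ 1 - r
  have hδsq : ‖δ‖ ^ 2 ≤ 1 - r := by
    have h : ‖δ‖ ^ 2 = 1 - 2 * r + ‖φ‖ ^ 2 := by
      rw [← hδ, @norm_sub_sq ℂ, hΨ]
      simp [← hr, RCLike.re_to_complex]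
    linarith
  constructor
  · -- main bound
    have hmain : (inner ℂ Ψ (Matrix.toEuclideanLin (Q * N * Q) Ψ) : ℂ)
        = inner ℂ φ (Matrix.toEuclideanLin N φ) := by
      rw [toEuclideanLin_mul, toEuclideanLin_mul, ← hQsym, hφ]
    rw [hmain]
    have hsplit : (inner ℂ φ (Matrix.toEuclideanLin N φ) : ℂ)
        = - inner ℂ Ψ (Matrix.toEuclideanLin N δ) - inner ℂ δ (Matrix.toEuclideanLin N φ) := by
      simp only [hφδ, map_sub, inner_sub_left, inner_sub_right, hNΨ]
      ring
    have b1 : ‖(inner ℂ Ψ (Matrix.toEuclideanLin N δ) : ℂ)‖ ≤ ‖δ‖ := by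
      calc ‖(inner ℂ Ψ (Matrix.toEuclideanLin N δ) : ℂ)‖
          ≤ ‖Ψ‖ * ‖Matrix.toEuclideanLin N δ‖ := norm_inner_le_norm _ _
        _ = ‖Matrix.toEuclideanLin N δ‖ := by rw [hΨ, one_mul]
        _ ≤ ‖δ‖ := hNle δ
    have b2 : ‖(inner ℂ δ (Matrix.toEuclideanLin N φ) : ℂ)‖ ≤ ‖δ‖ := by
      calc ‖(inner ℂ δ (Matrix.toEuclideanLin N φ) : ℂ)‖
          ≤ ‖δ‖ * ‖Matrix.toEuclideanLin N φ‖ := norm_inner_le_norm _ _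
        _ ≤ ‖δ‖ * 1 := mul_le_mul_of_nonneg_left (le_trans (hNle φ) hφ1) (norm_nonneg δ)
        _ = ‖δ‖ := mul_one _
    have btri : ‖(- inner ℂ Ψ (Matrix.toEuclideanLin N δ)
          - inner ℂ δ (Matrix.toEuclideanLin N φ) : ℂ)‖
        ≤ ‖(inner ℂ Ψ (Matrix.toEuclideanLin N δ) : ℂ)‖
          + ‖(inner ℂ δ (Matrix.toEuclideanLin N φ) : ℂ)‖ := by
      refine le_trans (norm_sub_le _ _) ?_
      rw [norm_neg]
    rw [hsplit]
    linarith
  · -- second bound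
    have : ‖δ‖ ≤ Real.sqrt (1 - r) := by
      rw [← Real.sqrt_sq (norm_nonneg δ)]
      exact Real.sqrt_le_sqrt hδsq
    linarith
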